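/- Let V ≥ 1 and n ≤ N be natural numbers with N ≥ 1, and let δ ∈ (0,1). Let X be a binomial random variable with n trials and success probability 1/V, and set ε(N) = √(V/(δ·N)). Then Pr(|V·X − n| ≥ ε(N)·N) ≤ δ. (This is the paper's Corollary on the actual sampling error after N packets: for any stream length N, the achievable sampling error satisfies ε_s(N) = √(Z·V/N) with the rigorous Chebyshev quantile 1/√δ in place of the normal quantile, i.e. ε_s(N) = √(V/(δN)); in particular the error decreases like 1/√N and is below any target ε exactly once N exceeds V/(δ·ε²).) -/

import Mathlib

open MeasureTheory

lemma bern_var_eval (n : ℕ) (p : ℝ) :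
    ∑ k ∈ Finset.range (n+1), ((n:ℝ)*p - k)^2 * ((n.choose k : ℝ) * p^k * (1-p)^(n-k))
      = n * p * (1-p) := by
  have h := bernsteinPolynomial.variance ℝ n
  have h2 := congrArg (Polynomial.eval p) h
  simp [Polynomial.eval_finset_sum, bernsteinPolynomial, nsmul_eq_mul, mul_comm] at h2
  rw [show (n:ℝ)*p*(1-p) = p*(n:ℝ)*(1-p) by ring, ← h2]
  exact Finset.sum_congr rfl fun k _ => by ring


/-- `X` is a binomial random variable with `n` trials and success probability `p`
on the probability space `(Ω, μ)`: its law is given by the binomial pmf. -/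
def IsBinomial {Ω : Type*} [MeasurableSpace Ω] (μ : Measure Ω) (X : Ω → ℕ) (n : ℕ) (p : ℝ) :
    Prop :=
  ∀ k : ℕ, μ {ω | X ω = k} = ENNReal.ofReal ((n.choose k : ℝ) * p ^ k * (1 - p) ^ (n - k))

/-- **Actual sampling error after `N` packets.** If `X ∼ Binomial(n, 1/V)` with `n ≤ N`,
then with `ε(N) = √(V / (δ·N))` we have `Pr(|V·X − n| ≥ ε(N)·N) ≤ δ`. -/
theorem binomial_sampling_error_of_N {Ω : Type*} [MeasurableSpace Ω] (μ : Measure Ω)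
    [IsProbabilityMeasure μ] (V n N : ℕ) (hV : 1 ≤ V) (hN : 1 ≤ N) (hnN : n ≤ N) (δ : ℝ)
    (hδ : δ ∈ Set.Ioo (0 : ℝ) 1)
    (X : Ω → ℕ) (hX : IsBinomial μ X n (1 / (V : ℝ))) :
    μ {ω | Real.sqrt ((V : ℝ) / (δ * (N : ℝ))) * (N : ℝ) ≤ |(V : ℝ) * (X ω : ℝ) - (n : ℝ)|}
      ≤ ENNReal.ofReal δ := by
  obtain ⟨hδ0, hδ1⟩ := hδ
  have hVpos : (0:ℝ) < V := by exact_mod_cast Nat.lt_of_lt_of_le Nat.zero_lt_one hV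
  have hNpos : (0:ℝ) < N := by exact_mod_cast Nat.lt_of_lt_of_le Nat.zero_lt_one hN
  set p : ℝ := 1 / (V : ℝ) with hp
  have hp0 : 0 < p := by positivity
  have hp1 : p ≤ 1 := by
    rw [hp, div_le_one hVpos]; exact_mod_cast hV
  set t : ℝ := Real.sqrt ((V : ℝ) / (δ * (N : ℝ))) * N with ht
  have ht0 : 0 < t := by
    apply mul_pos _ hNpos
    apply Real.sqrt_pos.2
    positivity
  have htsq : t^2 = (V:ℝ) * N / δ := by
    rw [ht, mul_pow, Real.sq_sqrt (by positivity)]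
    field_simp
  set f : ℕ → ℝ := fun k => (n.choose k : ℝ) * p ^ k * (1 - p) ^ (n - k) with hf
  have hf0 : ∀ k, 0 ≤ f k := by
    intro k
    have h1p : 0 ≤ 1 - p := by linarith
    positivity
  -- real core inequality
  have key : ∑ k ∈ Finset.range (n+1), (if t ≤ |(V:ℝ)*k - n| then f k else 0) ≤ δ := by
    set S := ∑ k ∈ Finset.range (n+1), (if t ≤ |(V:ℝ)*k - n| then f k else 0) with hS
    have hvar := bern_var_eval n p
    have hmain : t^2 * S ≤ (V:ℝ) * n := by
      have step1 : t^2 * S ≤ ∑ k ∈ Finset.range (n+1), ((n:ℝ)*p - k)^2 * f k * (V:ℝ)^2 := by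
        rw [hS, Finset.mul_sum]
        apply Finset.sum_le_sum
        intro k _
        split_ifs with hcond
        · have h1 : t^2 ≤ ((V:ℝ)*k - n)^2 := by
            calc t^2 ≤ |(V:ℝ)*k - n|^2 := by
                  apply pow_le_pow_left₀ ht0.le hcond
              _ = ((V:ℝ)*k - n)^2 := sq_abs _
          have h2 : ((V:ℝ)*k - n)^2 = ((n:ℝ)*p - k)^2 * (V:ℝ)^2 := by
            have hVnp : (V:ℝ)*((n:ℝ)*p) = n := by rw [hp]; field_simp
            linear_combination (2*(V:ℝ)*k - n - (V:ℝ)*((n:ℝ)*p)) * hVnp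
          calc t^2 * f k ≤ ((V:ℝ)*k - n)^2 * f k :=
                mul_le_mul_of_nonneg_right h1 (hf0 k)
            _ = ((n:ℝ)*p - k)^2 * f k * (V:ℝ)^2 := by rw [h2]; ring
        · simpa using mul_nonneg (mul_nonneg (sq_nonneg ((n:ℝ)*p - k)) (hf0 k)) (sq_nonneg (V:ℝ))
      have step2 : ∑ k ∈ Finset.range (n+1), ((n:ℝ)*p - k)^2 * f k * (V:ℝ)^2
          = (n:ℝ) * p * (1-p) * (V:ℝ)^2 := by
        rw [← Finset.sum_mul, hvar]
      have step3 : (n:ℝ) * p * (1-p) * (V:ℝ)^2 ≤ (V:ℝ) * n := by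
        have hVp : (V:ℝ) * p = 1 := by rw [hp]; field_simp
        have heq : (n:ℝ) * p * (1-p) * (V:ℝ)^2 = (V:ℝ) * n * (1 - p) := by
          linear_combination ((V:ℝ)*n*(1-p)) * hVp
        rw [heq]
        nlinarith [mul_nonneg (mul_nonneg hVpos.le (Nat.cast_nonneg (α := ℝ) n)) hp0.le]
      linarith
    have hS0 : 0 ≤ S := by
      apply Finset.sum_nonneg
      intro k _
      split_ifs
      · exact hf0 k
      · exact le_refl 0
    have htd : t^2 * δ = (V:ℝ) * N := by
      rw [htsq]; field_simp
    have hVnN : (V:ℝ) * n ≤ (V:ℝ) * N := by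
      apply mul_le_mul_of_nonneg_left _ hVpos.le
      exact_mod_cast hnN
    have hfin : t^2 * S ≤ t^2 * δ := by rw [htd]; linarith
    exact le_of_mul_le_mul_left hfin (by positivity)
  -- measure-theoretic part
  set g : ℕ → Set Ω := fun k => {ω | X ω = k ∧ t ≤ |(V:ℝ)*k - n|} with hg
  have hsub : {ω | t ≤ |(V:ℝ) * (X ω : ℝ) - n|} ⊆ ⋃ k, g k := by
    intro ω hω
    exact Set.mem_iUnion.2 ⟨X ω, rfl, hω⟩
  calc μ {ω | t ≤ |(V:ℝ) * (X ω : ℝ) - n|}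
      ≤ μ (⋃ k, g k) := measure_mono hsub
    _ ≤ ∑' k, μ (g k) := measure_iUnion_le g
    _ ≤ ∑' (k : ℕ), (if t ≤ |(V:ℝ)*k - n| then ENNReal.ofReal (f k) else 0) := by
        apply ENNReal.tsum_le_tsum
        intro k
        split_ifs with hcond
        · rw [← hX k]
          apply measure_mono
          intro ω hω; exact hω.1
        · have : g k = ∅ := by
            ext ω; simp only [hg, Set.mem_setOf_eq, Set.mem_empty_iff_false, iff_false]
            rintro ⟨-, h⟩; exact hcond h
          rw [this]; simp
    _ = ∑ k ∈ Finset.range (n+1), (if t ≤ |(V:ℝ)*k - n| then ENNReal.ofReal (f k) else 0) := by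
        apply tsum_eq_sum
        intro k hk
        have hkn : n < k := by
          simpa [Nat.lt_succ_iff, not_le] using fun h => hk (Finset.mem_range.2 (Nat.lt_succ_of_le h))
        have : f k = 0 := by
          simp [hf, Nat.choose_eq_zero_of_lt hkn]
        simp [this]
    _ = ENNReal.ofReal (∑ k ∈ Finset.range (n+1), (if t ≤ |(V:ℝ)*k - n| then f k else 0)) := by
        rw [ENNReal.ofReal_sum_of_nonneg]
        · apply Finset.sum_congr rfl
          intro k _
          split_ifs <;> simp
        · intro k _
          split_ifs
          · exact hf0 k
          · exact le_refl 0
    _ ≤ ENNReal.ofReal δ := ENNReal.ofReal_le_ofReal key
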